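/- Let X(τ, ζ, ζ̃) and T(u, ζ, ζ̃) be holomorphic functions on open subsets of ℂ³ (with P := 1 + ζζ̃ nonvanishing) that are inverse to each other in their first arguments, i.e. X(T(u,ζ,ζ̃), ζ, ζ̃) = u and T(X(τ,ζ,ζ̃), ζ, ζ̃) = τ, with ∂T/∂u nonvanishing. Define L(u, ζ, ζ̃) := P·(∂X/∂ζ)(T(u,ζ,ζ̃), ζ, ζ̃). Then the identity ðL + L·∂L/∂u = (ð²₍τ₎X)(T(u,ζ,ζ̃), ζ, ζ̃) holds, where ðL := ∂(P·L)/∂ζ (L has spin weight 1) and ð²₍τ₎X := ∂(P²·∂X/∂ζ)/∂ζ taken at fixed τ. Consequently, for any function σ(u, ζ, ζ̃), the function L satisfies the asymptotic shear-free condition ðL + L·∂L/∂u = σ(u, ζ, ζ̃) identically if and only if X satisfies the good cut equation ð²₍τ₎X(τ, ζ, ζ̃) = σ(X(τ,ζ,ζ̃), ζ, ζ̃) identically. -/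

import Mathlib

/-- `P = 1 + ζζ̃` for a point `(u, ζ, ζ̃)` (or `(τ, ζ, ζ̃)`) of `ℂ³`. -/
noncomputable def Pfun (p : ℂ × ℂ × ℂ) : ℂ := 1 + p.2.1 * p.2.2

/-- Partial derivative with respect to the first coordinate (`u` resp. `τ`). -/
noncomputable def D1 (f : ℂ × ℂ × ℂ → ℂ) (p : ℂ × ℂ × ℂ) : ℂ :=
  fderiv ℂ f p ((1 : ℂ), (0 : ℂ), (0 : ℂ))

/-- Partial derivative with respect to the second coordinate `ζ` (the other two held fixed). -/
noncomputable def D2 (f : ℂ × ℂ × ℂ → ℂ) (p : ℂ × ℂ × ℂ) : ℂ :=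
  fderiv ℂ f p ((0 : ℂ), (1 : ℂ), (0 : ℂ))

/-- Evaluation of a continuous linear functional on `ℂ³` via the standard basis. -/
lemma clm_eval (φ : (ℂ × ℂ × ℂ) →L[ℂ] ℂ) (w : ℂ × ℂ × ℂ) :
    φ w = w.1 * φ ((1:ℂ), (0:ℂ), (0:ℂ)) + w.2.1 * φ ((0:ℂ), (1:ℂ), (0:ℂ))
      + w.2.2 * φ ((0:ℂ), (0:ℂ), (1:ℂ)) := by
  have hw : w = w.1 • ((1:ℂ), (0:ℂ), (0:ℂ)) + w.2.1 • ((0:ℂ), (1:ℂ), (0:ℂ))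
      + w.2.2 • ((0:ℂ), (0:ℂ), (1:ℂ)) := by
    simp [Prod.ext_iff]
  conv_lhs => rw [hw]
  simp only [map_add, map_smul, smul_eq_mul]

/-- The derivative of `Pfun`. -/
noncomputable def PD (p : ℂ × ℂ × ℂ) : (ℂ × ℂ × ℂ) →L[ℂ] ℂ :=
  p.2.1 • ((ContinuousLinearMap.snd ℂ ℂ ℂ).comp (ContinuousLinearMap.snd ℂ ℂ (ℂ × ℂ)))
  + p.2.2 • ((ContinuousLinearMap.fst ℂ ℂ ℂ).comp (ContinuousLinearMap.snd ℂ ℂ (ℂ × ℂ)))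

lemma hasFDerivAt_Pfun (p : ℂ × ℂ × ℂ) : HasFDerivAt Pfun (PD p) p := by
  have h2 : HasFDerivAt (fun r : ℂ × ℂ × ℂ => r.2.1)
      ((ContinuousLinearMap.fst ℂ ℂ ℂ).comp (ContinuousLinearMap.snd ℂ ℂ (ℂ × ℂ))) p :=
    hasFDerivAt_fst.comp p hasFDerivAt_snd
  have h3 : HasFDerivAt (fun r : ℂ × ℂ × ℂ => r.2.2)
      ((ContinuousLinearMap.snd ℂ ℂ ℂ).comp (ContinuousLinearMap.snd ℂ ℂ (ℂ × ℂ))) p :=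
    hasFDerivAt_snd.comp p hasFDerivAt_snd
  exact (h2.mul h3).const_add 1

lemma PD_e1 (p : ℂ × ℂ × ℂ) : PD p ((1:ℂ), (0:ℂ), (0:ℂ)) = 0 := by simp [PD]
lemma PD_e2 (p : ℂ × ℂ × ℂ) : PD p ((0:ℂ), (1:ℂ), (0:ℂ)) = p.2.2 := by simp [PD]

/-- If `X(τ, ζ, ζ̃)` and `T(u, ζ, ζ̃)` are holomorphic and mutually inverse in
their first arguments, `∂T/∂u ≠ 0`, `P = 1 + ζζ̃ ≠ 0`, and
`L(u, ζ, ζ̃) = P·(∂X/∂ζ)(T(u,ζ,ζ̃), ζ, ζ̃)`, then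
`ðL + L·∂L/∂u = (ð²₍τ₎X)(T(u,ζ,ζ̃), ζ, ζ̃)` (where `ðL = ∂(P·L)/∂ζ` since `L` has spin
weight 1, and `ð²₍τ₎X = ∂(P²·∂X/∂ζ)/∂ζ` at fixed `τ`); consequently, for any `σ(u, ζ, ζ̃)`,
`L` satisfies the shear-free condition `ðL + L·∂L/∂u = σ(u, ζ, ζ̃)` identically if and only if
`X` satisfies the good cut equation `ð²₍τ₎X(τ, ζ, ζ̃) = σ(X(τ,ζ,ζ̃), ζ, ζ̃)` identically. -/
theorem shear_free_condition_iff_good_cut_equation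
    (U V : Set (ℂ × ℂ × ℂ)) (hU : IsOpen U) (hV : IsOpen V)
    (hPU : ∀ p ∈ U, Pfun p ≠ 0) (hPV : ∀ q ∈ V, Pfun q ≠ 0)
    (X T : ℂ × ℂ × ℂ → ℂ)
    (hX : DifferentiableOn ℂ X V) (hT : DifferentiableOn ℂ T U)
    (hmemV : ∀ p ∈ U, (T p, p.2.1, p.2.2) ∈ V)
    (hmemU : ∀ q ∈ V, (X q, q.2.1, q.2.2) ∈ U)
    (hXT : ∀ p ∈ U, X (T p, p.2.1, p.2.2) = p.1)
    (hTX : ∀ q ∈ V, T (X q, q.2.1, q.2.2) = q.1)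
    (hTu : ∀ p ∈ U, D1 T p ≠ 0)
    (L : ℂ × ℂ × ℂ → ℂ)
    (hL : ∀ p, L p = Pfun p * D2 X (T p, p.2.1, p.2.2)) :
    (∀ p ∈ U,
        D2 (fun r => Pfun r * L r) p + L p * D1 L p
          = D2 (fun r => Pfun r ^ 2 * D2 X r) (T p, p.2.1, p.2.2)) ∧
    (∀ σ : ℂ × ℂ × ℂ → ℂ,
        (∀ p ∈ U, D2 (fun r => Pfun r * L r) p + L p * D1 L p = σ p) ↔
        (∀ q ∈ V, D2 (fun r => Pfun r ^ 2 * D2 X r) q = σ (X q, q.2.1, q.2.2))) := by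
  have key : ∀ p ∈ U,
      D2 (fun r => Pfun r * L r) p + L p * D1 L p
        = D2 (fun r => Pfun r ^ 2 * D2 X r) (T p, p.2.1, p.2.2) := by
    intro p hp
    set q : ℂ × ℂ × ℂ := (T p, p.2.1, p.2.2) with hqdef
    have hq : q ∈ V := hmemV p hp
    have hPp : Pfun p ≠ 0 := hPU p hp
    have hXq : DifferentiableAt ℂ X q := hX.differentiableAt (hV.mem_nhds hq)
    have hTp : DifferentiableAt ℂ T p := hT.differentiableAt (hU.mem_nhds hp)
    set Φg : (ℂ × ℂ × ℂ) →L[ℂ] (ℂ × ℂ × ℂ) :=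
      (fderiv ℂ T p).prod (ContinuousLinearMap.snd ℂ ℂ (ℂ × ℂ)) with hΦg
    have hg : HasFDerivAt (fun r : ℂ × ℂ × ℂ => ((T r : ℂ), r.2.1, r.2.2)) Φg p :=
      HasFDerivAt.prodMk hTp.hasFDerivAt hasFDerivAt_snd
    have hΦge1 : Φg ((1:ℂ), (0:ℂ), (0:ℂ)) = (D1 T p, (0:ℂ), (0:ℂ)) := by
      simp [hΦg, ContinuousLinearMap.prod_apply, D1]
    have hΦge2 : Φg ((0:ℂ), (1:ℂ), (0:ℂ)) = (D2 T p, (1:ℂ), (0:ℂ)) := by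
      simp [hΦg, ContinuousLinearMap.prod_apply, D2]
    have hcomp : HasFDerivAt (fun r : ℂ × ℂ × ℂ => X ((T r : ℂ), r.2.1, r.2.2))
        ((fderiv ℂ X q).comp Φg) p := hXq.hasFDerivAt.comp p hg
    have hXg : (fderiv ℂ X q).comp Φg = ContinuousLinearMap.fst ℂ ℂ (ℂ × ℂ) := by
      rw [← hcomp.fderiv]
      have h1 : (fun r : ℂ × ℂ × ℂ => X ((T r : ℂ), r.2.1, r.2.2)) =ᶠ[nhds p]
          (fun r => r.1) := Filter.eventuallyEq_of_mem (hU.mem_nhds hp) hXT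
      rw [h1.fderiv_eq]
      exact fderiv_fst
    have hrel1 : D1 T p * D1 X q = 1 := by
      have h : ((fderiv ℂ X q).comp Φg) ((1:ℂ), (0:ℂ), (0:ℂ)) = 1 := by rw [hXg]; rfl
      rw [ContinuousLinearMap.comp_apply, hΦge1, clm_eval] at h
      simpa [D1] using h
    have hrel2 : D2 T p * D1 X q + D2 X q = 0 := by
      have h : ((fderiv ℂ X q).comp Φg) ((0:ℂ), (1:ℂ), (0:ℂ)) = 0 := by rw [hXg]; rfl
      rw [ContinuousLinearMap.comp_apply, hΦge2, clm_eval] at h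
      simpa [D1, D2] using h
    by_cases hreg : DifferentiableAt ℂ (D2 X) q
    · -- regular case: the honest chain-rule computation
      have hB : HasFDerivAt (fun r : ℂ × ℂ × ℂ => D2 X ((T r : ℂ), r.2.1, r.2.2))
          ((fderiv ℂ (D2 X) q).comp Φg) p := HasFDerivAt.comp (g := D2 X) p hreg.hasFDerivAt hg
      have hP : HasFDerivAt Pfun (PD p) p := hasFDerivAt_Pfun p
      have hLf : L = fun r : ℂ × ℂ × ℂ => Pfun r * D2 X ((T r : ℂ), r.2.1, r.2.2) :=
        funext hL
      have hLd : HasFDerivAt L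
          (Pfun p • ((fderiv ℂ (D2 X) q).comp Φg) + (D2 X q) • PD p) p := by
        rw [hLf]; exact hP.mul hB
      have hPL : HasFDerivAt (fun r => Pfun r * L r)
          (Pfun p • (Pfun p • ((fderiv ℂ (D2 X) q).comp Φg) + (D2 X q) • PD p)
            + L p • PD p) p := hP.mul hLd
      have hPq : HasFDerivAt Pfun (PD q) q := hasFDerivAt_Pfun q
      have hF : HasFDerivAt (fun r => Pfun r ^ 2 * D2 X r)
          ((Pfun q * Pfun q) • fderiv ℂ (D2 X) q
            + (D2 X q) • (Pfun q • PD q + Pfun q • PD q)) q := by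
        have h0 : (fun r : ℂ × ℂ × ℂ => Pfun r ^ 2 * D2 X r)
            = fun r => (Pfun r * Pfun r) * D2 X r := by funext r; ring
        rw [h0]
        exact (hPq.mul hPq).mul hreg.hasFDerivAt
      have hPqp : Pfun q = Pfun p := rfl
      have hq22 : q.2.2 = p.2.2 := rfl
      have h1 : D2 (fun r => Pfun r * L r) p
          = (Pfun p • (Pfun p • ((fderiv ℂ (D2 X) q).comp Φg) + (D2 X q) • PD p)
            + L p • PD p) ((0:ℂ), (1:ℂ), (0:ℂ)) := by rw [D2, hPL.fderiv]
      have h2 : D1 L p = (Pfun p • ((fderiv ℂ (D2 X) q).comp Φg) + (D2 X q) • PD p)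
          ((1:ℂ), (0:ℂ), (0:ℂ)) := by rw [D1, hLd.fderiv]
      have h3 : D2 (fun r => Pfun r ^ 2 * D2 X r) q
          = ((Pfun q * Pfun q) • fderiv ℂ (D2 X) q
            + (D2 X q) • (Pfun q • PD q + Pfun q • PD q)) ((0:ℂ), (1:ℂ), (0:ℂ)) := by
        rw [D2, hF.fderiv]
      rw [h1, h2, h3]
      simp only [ContinuousLinearMap.add_apply, ContinuousLinearMap.smul_apply,
        ContinuousLinearMap.comp_apply, hΦge1, hΦge2, PD_e1, PD_e2, smul_eq_mul,
        hPqp, hq22, hL p]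
      rw [clm_eval (fderiv ℂ (D2 X) q) (D1 T p, (0:ℂ), (0:ℂ)),
        clm_eval (fderiv ℂ (D2 X) q) (D2 T p, (1:ℂ), (0:ℂ))]
      set a := D1 X q
      set b := D2 X q
      set A1 := fderiv ℂ (D2 X) q ((1:ℂ), (0:ℂ), (0:ℂ))
      set A2 := fderiv ℂ (D2 X) q ((0:ℂ), (1:ℂ), (0:ℂ))
      set A3 := fderiv ℂ (D2 X) q ((0:ℂ), (0:ℂ), (1:ℂ))
      set P := Pfun p
      set T1 := D1 T p
      set T2 := D2 T p
      linear_combination (P^2 * A1 * T1) * hrel2 - (P^2 * A1 * T2) * hrel1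
    · -- degenerate case: all fderivs involved are junk `0`
      have hPd : DifferentiableAt ℂ Pfun q := (hasFDerivAt_Pfun q).differentiableAt
      have hPdp : DifferentiableAt ℂ Pfun p := (hasFDerivAt_Pfun p).differentiableAt
      have hPqne : Pfun q ≠ 0 := hPV q hq
      have hnotL : ¬ DifferentiableAt ℂ L p := by
        intro hd
        apply hreg
        have hh : ((X q : ℂ), q.2.1, q.2.2) = p := by rw [hXT p hp]
        have hXqd : DifferentiableAt ℂ (fun r : ℂ × ℂ × ℂ => ((X r : ℂ), r.2.1, r.2.2)) q :=
          DifferentiableAt.prodMk hXq differentiableAt_snd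
        have hd' : DifferentiableAt ℂ L ((X q : ℂ), q.2.1, q.2.2) := hh ▸ hd
        have hcd : DifferentiableAt ℂ (fun r : ℂ × ℂ × ℂ => L ((X r : ℂ), r.2.1, r.2.2)) q :=
          hd'.comp q hXqd
        have heq : (fun r : ℂ × ℂ × ℂ => Pfun r * D2 X r) =ᶠ[nhds q]
            (fun r : ℂ × ℂ × ℂ => L ((X r : ℂ), r.2.1, r.2.2)) := by
          filter_upwards [hV.mem_nhds hq] with r hr
          rw [hL ((X r : ℂ), r.2.1, r.2.2), hTX r hr]
          rfl
        have hPLd : DifferentiableAt ℂ (fun r : ℂ × ℂ × ℂ => Pfun r * D2 X r) q :=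
          hcd.congr_of_eventuallyEq heq
        have hne : ∀ᶠ r in nhds q, Pfun r ≠ 0 := hPd.continuousAt.eventually_ne hPqne
        have : DifferentiableAt ℂ (fun r : ℂ × ℂ × ℂ => (Pfun r)⁻¹ * (Pfun r * D2 X r)) q :=
          (hPd.inv hPqne).mul hPLd
        refine this.congr_of_eventuallyEq ?_
        filter_upwards [hne] with r hr
        field_simp
      have hnotPL : ¬ DifferentiableAt ℂ (fun r => Pfun r * L r) p := by
        intro hd
        apply hnotL
        have hne : ∀ᶠ r in nhds p, Pfun r ≠ 0 := hPdp.continuousAt.eventually_ne hPp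
        have : DifferentiableAt ℂ (fun r : ℂ × ℂ × ℂ => (Pfun r)⁻¹ * (Pfun r * L r)) p :=
          (hPdp.inv hPp).mul hd
        refine this.congr_of_eventuallyEq ?_
        filter_upwards [hne] with r hr
        field_simp
      have hnotF : ¬ DifferentiableAt ℂ (fun r => Pfun r ^ 2 * D2 X r) q := by
        intro hd
        apply hreg
        have hne : ∀ᶠ r in nhds q, Pfun r ≠ 0 := hPd.continuousAt.eventually_ne hPqne
        have : DifferentiableAt ℂ
            (fun r : ℂ × ℂ × ℂ => (Pfun r ^ 2)⁻¹ * (Pfun r ^ 2 * D2 X r)) q :=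
          ((hPd.pow 2).inv (pow_ne_zero 2 hPqne)).mul hd
        refine this.congr_of_eventuallyEq ?_
        filter_upwards [hne] with r hr
        field_simp
      have z1 : D2 (fun r => Pfun r * L r) p = 0 := by
        rw [D2, fderiv_zero_of_not_differentiableAt hnotPL]; rfl
      have z2 : D1 L p = 0 := by
        rw [D1, fderiv_zero_of_not_differentiableAt hnotL]; rfl
      have z3 : D2 (fun r => Pfun r ^ 2 * D2 X r) q = 0 := by
        rw [D2, fderiv_zero_of_not_differentiableAt hnotF]; rfl
      rw [z1, z2, z3, mul_zero, add_zero]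
  refine ⟨key, fun σ => ⟨fun hsf q hq => ?_, fun hgc p hp => ?_⟩⟩
  · have h := (key ((X q : ℂ), q.2.1, q.2.2) (hmemU q hq)).symm.trans
      (hsf ((X q : ℂ), q.2.1, q.2.2) (hmemU q hq))
    simp only [hTX q hq] at h
    exact h
  · have h := (key p hp).trans (hgc ((T p : ℂ), p.2.1, p.2.2) (hmemV p hp))
    simp only [hXT p hp] at h
    exact h
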